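/- Suppose L satisfies the entropy-information inequality EI(Φ) with growth function Φ(r) = α·log(A + r/β), where α, β > 0 and A ≥ 1. Then the modified Nash inequality ‖f‖₂^{2α+2} ≤ ( A·‖f‖₂² + I(f²)/β )^{α} · ‖f‖₁² holds for every f ∈ ℓ²(μ) with f(x) ≠ 0 for all x ∈ X. -/

import Mathlib

open Real Filter MeasureTheory Set

/-- `M₁(x) = ∑_{y ≠ x} k(x,y)`. -/
noncomputable def M1fn {X : Type*} (k : X → X → ℝ) (x : X) : ℝ :=
  ∑' y : {y : X // y ≠ x}, k x y

/-- The standing assumptions on the transition rates and the invariant probability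
measure: nonnegative off-diagonal rates, summable rows, `k(x,x) = -M₁(x)`,
a strictly positive probability density and detailed balance. -/
def MarkovSetting {X : Type*} (k : X → X → ℝ) (μ : X → ℝ) : Prop :=
  (∀ x y, x ≠ y → 0 ≤ k x y) ∧
  (∀ x : X, Summable fun y : {y : X // y ≠ x} => k x y) ∧
  (∀ x : X, k x x = -M1fn k x) ∧
  (∀ x, 0 < μ x) ∧ (∑' x, μ x) = 1 ∧
  (∀ x y, μ x * k x y = μ y * k y x)

/-- The entropy `Ent_μ(f)`. -/
noncomputable def entFn {X : Type*} (μ f : X → ℝ) : ℝ :=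
  (∑' x, f x * Real.log (f x) * μ x) -
    (∑' x, f x * μ x) * Real.log (∑' x, f x * μ x)

/-- The Fisher information `I(f) = (1/2) ∑_{x,y} k(x,y)(f(y)-f(x))(log f(y)-log f(x)) μ(x)`. -/
noncomputable def fisherFn {X : Type*} (k : X → X → ℝ) (μ f : X → ℝ) : ℝ :=
  (1/2) * ∑' p : X × X,
    k p.1 p.2 * (f p.2 - f p.1) * (Real.log (f p.2) - Real.log (f p.1)) * μ p.1

/-- Finiteness of the Fisher information. -/
def FisherFinite {X : Type*} (k : X → X → ℝ) (μ f : X → ℝ) : Prop :=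
  Summable fun p : X × X =>
    k p.1 p.2 * (f p.2 - f p.1) * (Real.log (f p.2) - Real.log (f p.1)) * μ p.1

/-- A growth function: strictly increasing, concave, `C¹` and positive on `(0,∞)`. -/
def GrowthFun (Φ : ℝ → ℝ) : Prop :=
  StrictMonoOn Φ (Ioi 0) ∧ ConcaveOn ℝ (Ioi 0) Φ ∧
    ContDiffOn ℝ 1 Φ (Ioi 0) ∧ ∀ r : ℝ, 0 < r → 0 < Φ r

/-- The entropy-information inequality `EI(Φ)`:
`Ent_μ(f) ≤ Φ(I(f))` for all probability densities `f ∈ P_*(X)` with finite entropy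
and finite Fisher information. -/
def EIineq {X : Type*} (k : X → X → ℝ) (μ : X → ℝ) (Φ : ℝ → ℝ) : Prop :=
  ∀ f : X → ℝ, (∀ x, 0 < f x) → (∑' x, f x * μ x) = 1 →
    (Summable fun x => f x * Real.log (f x) * μ x) →
    FisherFinite k μ f →
    entFn μ f ≤ Φ (fisherFn k μ f)

open scoped ENNReal

/-- The Fisher information as an extended nonnegative real (all summands are
nonnegative, so this is the honest value in `[0,∞]`). -/
noncomputable def fisherE {X : Type*} (k : X → X → ℝ) (μ f : X → ℝ) : ℝ≥0∞ :=
  (1/2 : ℝ≥0∞) * ∑' p : X × X, ENNReal.ofReal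
    (k p.1 p.2 * (f p.2 - f p.1) * (Real.log (f p.2) - Real.log (f p.1)) * μ p.1)

/- ---------- auxiliary material ---------- -/

noncomputable def fTerm {X : Type*} (k : X → X → ℝ) (μ f : X → ℝ) (p : X × X) : ℝ :=
  k p.1 p.2 * (f p.2 - f p.1) * (Real.log (f p.2) - Real.log (f p.1)) * μ p.1

lemma log_diff_nonneg_aux {a b : ℝ} (ha : 0 < a) (hb : 0 < b) :
    0 ≤ (a - b) * (Real.log a - Real.log b) := by
  rcases le_total b a with h | h
  · nlinarith [mul_nonneg (sub_nonneg.2 h) (sub_nonneg.2 (Real.log_le_log hb h))]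
  · nlinarith [mul_nonneg (sub_nonneg.2 h) (sub_nonneg.2 (Real.log_le_log ha h))]

lemma trunc_ord_aux {a b m : ℝ} (hb : 0 < b) (hba : b ≤ a) (hm : 0 < m) :
    (min a m - min b m) * (Real.log (min a m) - Real.log (min b m)) ≤
      (a - b) * (Real.log a - Real.log b) := by
  have ha : 0 < a := lt_of_lt_of_le hb hba
  have hbm : 0 < min b m := lt_min hb hm
  have h1 : min a m - min b m ≤ a - b := by
    rcases le_total b m with h | h
    · rw [min_eq_left h]; linarith [min_le_left a m]
    · rw [min_eq_right h]; linarith [min_le_right a m]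
  have h3 : 0 ≤ min a m - min b m := by
    have : min b m ≤ min a m := min_le_min hba le_rfl
    linarith
  have h4 : 0 ≤ Real.log (min a m) - Real.log (min b m) := by
    have : min b m ≤ min a m := min_le_min hba le_rfl
    linarith [Real.log_le_log hbm this]
  have h2 : Real.log (min a m) - Real.log (min b m) ≤ Real.log a - Real.log b := by
    rcases le_total a m with h | h
    · rw [min_eq_left h, min_eq_left (le_trans hba h)]
    · rw [min_eq_right h]
      rcases le_total b m with h' | h'
      · rw [min_eq_left h']
        linarith [Real.log_le_log hm h]
      · rw [min_eq_right h']
        linarith [Real.log_le_log hb hba]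
  exact mul_le_mul h1 h2 h4 (by linarith)

lemma trunc_aux {a b m : ℝ} (ha : 0 < a) (hb : 0 < b) (hm : 0 < m) :
    (min a m - min b m) * (Real.log (min a m) - Real.log (min b m)) ≤
      (a - b) * (Real.log a - Real.log b) := by
  rcases le_total b a with h | h
  · exact trunc_ord_aux hb h hm
  · calc (min a m - min b m) * (Real.log (min a m) - Real.log (min b m))
        = (min b m - min a m) * (Real.log (min b m) - Real.log (min a m)) := by ring
      _ ≤ (b - a) * (Real.log b - Real.log a) := trunc_ord_aux ha h hm
      _ = (a - b) * (Real.log a - Real.log b) := by ring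

lemma tlogt_bound_aux {t M : ℝ} (ht : 0 < t) (htM : t ≤ M) :
    |t * Real.log t| ≤ 1 + M * |Real.log M| := by
  have hM0 : 0 < M := lt_of_lt_of_le ht htM
  have hMl : 0 ≤ M * |Real.log M| := mul_nonneg hM0.le (abs_nonneg _)
  rw [abs_le]
  constructor
  · have h1 : Real.log t⁻¹ ≤ t⁻¹ - 1 := Real.log_le_sub_one_of_pos (by positivity)
    rw [Real.log_inv] at h1
    have h2 : t * (1 - t⁻¹) ≤ t * Real.log t :=
      mul_le_mul_of_nonneg_left (by linarith) ht.le
    have h3 : t * (1 - t⁻¹) = t - 1 := by field_simp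
    nlinarith
  · rcases le_total t 1 with h | h
    · have : t * Real.log t ≤ 0 := mul_nonpos_of_nonneg_of_nonpos ht.le (Real.log_nonpos ht.le h)
      linarith
    · have hlt : Real.log t ≤ Real.log M := Real.log_le_log ht htM
      have h0 : 0 ≤ Real.log t := Real.log_nonneg h
      have h5 : t * Real.log t ≤ M * Real.log M := mul_le_mul htM hlt h0 hM0.le
      have h6 : M * Real.log M ≤ M * |Real.log M| :=
        mul_le_mul_of_nonneg_left (le_abs_self _) hM0.le
      linarith

lemma fTerm_nonneg_aux {X : Type*} {k : X → X → ℝ} {μ h : X → ℝ}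
    (hk : ∀ x y, x ≠ y → 0 ≤ k x y) (hμ : ∀ x, 0 ≤ μ x) (hh : ∀ x, 0 < h x) (p : X × X) :
    0 ≤ fTerm k μ h p := by
  rcases eq_or_ne p.1 p.2 with he | he
  · simp [fTerm, he]
  · have h1 : 0 ≤ (h p.2 - h p.1) * (Real.log (h p.2) - Real.log (h p.1)) :=
      log_diff_nonneg_aux (hh p.2) (hh p.1)
    have h2 : fTerm k μ h p =
        k p.1 p.2 * ((h p.2 - h p.1) * (Real.log (h p.2) - Real.log (h p.1))) * μ p.1 := by
      simp only [fTerm]; ring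
    rw [h2]
    exact mul_nonneg (mul_nonneg (hk _ _ he) h1) (hμ _)

lemma fTerm_trunc_aux {X : Type*} {k : X → X → ℝ} {μ h : X → ℝ} {m : ℝ}
    (hk : ∀ x y, x ≠ y → 0 ≤ k x y) (hμ : ∀ x, 0 ≤ μ x) (hh : ∀ x, 0 < h x) (hm : 0 < m)
    (p : X × X) :
    fTerm k μ (fun x => min (h x) m) p ≤ fTerm k μ h p := by
  rcases eq_or_ne p.1 p.2 with he | he
  · simp [fTerm, he]
  · have key := trunc_aux (hh p.2) (hh p.1) hm
    have h2 : fTerm k μ (fun x => min (h x) m) p =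
        k p.1 p.2 * ((min (h p.2) m - min (h p.1) m) *
          (Real.log (min (h p.2) m) - Real.log (min (h p.1) m))) * μ p.1 := by
      simp only [fTerm]; ring
    have h3 : fTerm k μ h p =
        k p.1 p.2 * ((h p.2 - h p.1) * (Real.log (h p.2) - Real.log (h p.1))) * μ p.1 := by
      simp only [fTerm]; ring
    rw [h2, h3]
    exact mul_le_mul_of_nonneg_right
      (mul_le_mul_of_nonneg_left key (hk _ _ he)) (hμ _)

lemma fTerm_div_aux {X : Type*} {k : X → X → ℝ} {μ h : X → ℝ} {N : ℝ}
    (hh : ∀ x, 0 < h x) (hN : 0 < N) (p : X × X) :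
    fTerm k μ (fun x => h x / N) p = fTerm k μ h p / N := by
  simp only [fTerm]
  rw [Real.log_div (hh p.2).ne' hN.ne', Real.log_div (hh p.1).ne' hN.ne']
  ring

lemma fisherFn_eq_aux {X : Type*} (k : X → X → ℝ) (μ h : X → ℝ) :
    fisherFn k μ h = (1/2) * ∑' p : X × X, fTerm k μ h p := rfl

lemma fisherFinite_iff_aux {X : Type*} (k : X → X → ℝ) (μ h : X → ℝ) :
    FisherFinite k μ h ↔ Summable (fTerm k μ h) := Iff.rfl

set_option maxHeartbeats 1600000 in
/-- The modified Nash inequality under `EI(Φ)` with logarithmic growth function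
`Φ(r) = α log(A + r/β)` (Theorem 6.1). -/
theorem stmt_6 {X : Type*} [Countable X] (k : X → X → ℝ) (μ : X → ℝ)
    (hMS : MarkovSetting k μ) (α β A : ℝ) (hα : 0 < α) (hβ : 0 < β) (hA : 1 ≤ A)
    (hEI : EIineq k μ (fun r => α * Real.log (A + r / β)))
    (f : X → ℝ) (hf2 : Summable fun x => f x ^ 2 * μ x) (hne : ∀ x, f x ≠ 0) :
    ENNReal.ofReal (Real.sqrt (∑' x, f x ^ 2 * μ x) ^ (2 * α + 2)) ≤
      (ENNReal.ofReal (A * ∑' x, f x ^ 2 * μ x) +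
          fisherE k μ (fun x => f x ^ 2) / ENNReal.ofReal β) ^ α *
        ENNReal.ofReal ((∑' x, |f x| * μ x) ^ 2) := by
  obtain ⟨hk, -, -, hμpos, hμ1, -⟩ := hMS
  rcases isEmpty_or_nonempty X with hempty | hX
  · rw [tsum_empty] at hμ1; norm_num at hμ1
  set N := ∑' x, f x ^ 2 * μ x with hNdef
  set L := ∑' x, |f x| * μ x with hLdef
  obtain ⟨x₀⟩ := hX
  have hμsum : Summable μ := by
    by_contra hcon
    rw [tsum_eq_zero_of_not_summable hcon] at hμ1; norm_num at hμ1
  have hf2pos : ∀ x, 0 < f x ^ 2 := fun x =>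
    lt_of_le_of_ne (sq_nonneg _) (Ne.symm (pow_ne_zero 2 (hne x)))
  have hN : 0 < N :=
    Summable.tsum_pos hf2 (fun x => mul_nonneg (sq_nonneg _) (hμpos x).le) x₀
      (mul_pos (hf2pos x₀) (hμpos x₀))
  have hLsum : Summable fun x => |f x| * μ x := by
    apply Summable.of_nonneg_of_le (fun x => mul_nonneg (abs_nonneg _) (hμpos x).le)
      (fun x => ?_) ((hf2.add hμsum).div_const 2)
    have h1 : 2 * |f x| ≤ f x ^ 2 + 1 := by nlinarith [sq_nonneg (|f x| - 1), sq_abs (f x)]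
    have h2 := mul_le_mul_of_nonneg_right h1 (hμpos x).le
    nlinarith
  have hL : 0 < L :=
    Summable.tsum_pos hLsum (fun x => mul_nonneg (abs_nonneg _) (hμpos x).le) x₀
      (mul_pos (abs_pos.2 (hne x₀)) (hμpos x₀))
  have hL2pos : (0:ℝ) < L ^ 2 := by positivity
  have hfE' : fisherE k μ (fun x => f x ^ 2) =
      (1/2 : ℝ≥0∞) * ∑' p : X × X, ENNReal.ofReal (fTerm k μ (fun x => f x ^ 2) p) := by
    simp only [fisherE, fTerm]
  by_cases hS : Summable (fTerm k μ (fun x => f x ^ 2))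
  case neg =>
    have htop : (∑' p : X × X, ENNReal.ofReal (fTerm k μ (fun x => f x ^ 2) p)) = ⊤ := by
      by_contra hcon
      apply hS
      have hsum : Summable fun p : X × X => (fTerm k μ (fun x => f x ^ 2) p).toNNReal := by
        apply ENNReal.tsum_coe_ne_top_iff_summable.mp
        exact hcon
      have hc := NNReal.summable_coe.2 hsum
      refine hc.congr fun p => ?_
      exact Real.coe_toNNReal _ (fTerm_nonneg_aux hk (fun x => (hμpos x).le) hf2pos p)
    have hEtop : fisherE k μ (fun x => f x ^ 2) = ⊤ := by
      rw [hfE', htop, ENNReal.mul_top (by norm_num)]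
    rw [hEtop, ENNReal.top_div_of_ne_top ENNReal.ofReal_ne_top]
    have h1 : (ENNReal.ofReal (A * N) + ⊤ : ℝ≥0∞) = ⊤ := by simp
    rw [h1, ENNReal.top_rpow_of_pos hα, ENNReal.top_mul (ENNReal.ofReal_pos.2 hL2pos).ne']
    exact le_top
  case pos =>
  have hterm0 : ∀ p, 0 ≤ fTerm k μ (fun x => f x ^ 2) p :=
    fTerm_nonneg_aux hk (fun x => (hμpos x).le) hf2pos
  set T2 := ∑' p : X × X, fTerm k μ (fun x => f x ^ 2) p with hT2def
  have hT2 : 0 ≤ T2 := tsum_nonneg hterm0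
  set Ir := (1/2 : ℝ) * T2 with hIrdef
  have hIr : 0 ≤ Ir := by positivity
  set C := A * N + Ir / β with hCdef
  have hC : 0 < C := by
    have h1 : 0 < A * N := mul_pos (by linarith) hN
    have h2 : 0 ≤ Ir / β := div_nonneg hIr hβ.le
    rw [hCdef]; linarith
  have key : ∀ m : ℝ, 0 < m →
      (∑' x, min (f x ^ 2) m * μ x) ^ (α + 1) ≤ C ^ α * L ^ 2 := by
    intro m hm
    set c : X → ℝ := fun x => min (f x ^ 2) m with hcdef
    have hcpos : ∀ x, 0 < c x := fun x => lt_min (hf2pos x) hm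
    have hcle : ∀ x, c x ≤ f x ^ 2 := fun x => min_le_left _ _
    have hscμ : Summable fun x => c x * μ x :=
      Summable.of_nonneg_of_le (fun x => mul_nonneg (hcpos x).le (hμpos x).le)
        (fun x => mul_le_mul_of_nonneg_right (hcle x) (hμpos x).le) hf2
    set Nn := ∑' x, c x * μ x with hNndef
    have hNn : 0 < Nn :=
      Summable.tsum_pos hscμ (fun x => mul_nonneg (hcpos x).le (hμpos x).le) x₀
        (mul_pos (hcpos x₀) (hμpos x₀))
    have hNnN : Nn ≤ N :=
      Summable.tsum_le_tsum (fun x => mul_le_mul_of_nonneg_right (hcle x) (hμpos x).le) hscμ hf2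
    set g : X → ℝ := fun x => c x / Nn with hgdef
    have hgpos : ∀ x, 0 < g x := fun x => div_pos (hcpos x) hNn
    have hgm : Summable fun x => g x * μ x := by
      refine (hscμ.div_const Nn).congr fun x => ?_
      simp only [hgdef]; ring
    have hg1 : (∑' x, g x * μ x) = 1 := by
      have he : (fun x => g x * μ x) = fun x => c x * μ x / Nn := by
        funext x; simp only [hgdef]; ring
      rw [he, tsum_div_const, div_self hNn.ne']
    have hgle : ∀ x, g x ≤ m / Nn := fun x => by
      simp only [hgdef, hcdef]
      exact (div_le_div_iff_of_pos_right hNn).2 (min_le_right _ _)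
    have hegbound : ∀ x, |g x * Real.log (g x) * μ x| ≤
        (1 + (m / Nn) * |Real.log (m / Nn)|) * μ x := by
      intro x
      rw [abs_mul, abs_of_nonneg (hμpos x).le]
      exact mul_le_mul_of_nonneg_right (tlogt_bound_aux (hgpos x) (hgle x)) (hμpos x).le
    have heg : Summable fun x => g x * Real.log (g x) * μ x := by
      apply summable_abs_iff.mp
      exact Summable.of_nonneg_of_le (fun x => abs_nonneg _) hegbound
        (hμsum.mul_left _)
    set E := ∑' x, g x * Real.log (g x) * μ x with hEdef
    have htermg : ∀ p, fTerm k μ g p = fTerm k μ c p / Nn := fTerm_div_aux hcpos hNn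
    have hTcsum : Summable (fTerm k μ c) :=
      Summable.of_nonneg_of_le (fTerm_nonneg_aux hk (fun x => (hμpos x).le) hcpos)
        (fTerm_trunc_aux hk (fun x => (hμpos x).le) hf2pos hm) hS
    set Tc := ∑' p : X × X, fTerm k μ c p with hTcdef
    have hTc0 : 0 ≤ Tc := tsum_nonneg (fTerm_nonneg_aux hk (fun x => (hμpos x).le) hcpos)
    have hTcle : Tc ≤ T2 :=
      Summable.tsum_le_tsum (fTerm_trunc_aux hk (fun x => (hμpos x).le) hf2pos hm) hTcsum hS
    have hFg : FisherFinite k μ g := by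
      rw [fisherFinite_iff_aux]
      have h2 : Summable fun p : X × X => fTerm k μ c p / Nn := hTcsum.div_const Nn
      exact h2.congr fun p => (htermg p).symm
    have hfisherg : fisherFn k μ g = 1/2 * (Tc / Nn) := by
      have h1 : (∑' p : X × X, fTerm k μ g p) = Tc / Nn := by
        calc (∑' p : X × X, fTerm k μ g p) = ∑' p : X × X, fTerm k μ c p / Nn :=
              tsum_congr htermg
          _ = Tc / Nn := tsum_div_const
      rw [fisherFn_eq_aux, h1]
    have hEnt := hEI g hgpos hg1 heg hFg
    dsimp only at hEnt
    have hentg : entFn μ g = E := by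
      unfold entFn
      rw [hg1, ← hEdef]
      simp
    rw [hentg, hfisherg] at hEnt
    -- lower bound on the entropy
    set u : X → ℝ := fun x => Real.sqrt (c x) / L with hudef
    have hupos : ∀ x, 0 < u x := fun x => div_pos (Real.sqrt_pos.2 (hcpos x)) hL
    have husq : ∀ x, Real.sqrt (c x) ≤ |f x| := by
      intro x
      rw [← Real.sqrt_sq_eq_abs]
      exact Real.sqrt_le_sqrt (hcle x)
    have hum : Summable fun x => u x * μ x := by
      apply Summable.of_nonneg_of_le (fun x => mul_nonneg (hupos x).le (hμpos x).le)
        (fun x => ?_) (hLsum.div_const L)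
      simp only [hudef]
      calc Real.sqrt (c x) / L * μ x = Real.sqrt (c x) * μ x / L := by ring
        _ ≤ |f x| * μ x / L :=
            (div_le_div_iff_of_pos_right hL).2 (mul_le_mul_of_nonneg_right (husq x) (hμpos x).le)
    have hU : (∑' x, u x * μ x) ≤ 1 := by
      have h1 : (∑' x, u x * μ x) ≤ ∑' x, |f x| * μ x / L := by
        apply Summable.tsum_le_tsum _ hum (hLsum.div_const L)
        intro x
        simp only [hudef]
        calc Real.sqrt (c x) / L * μ x = Real.sqrt (c x) * μ x / L := by ring
          _ ≤ |f x| * μ x / L :=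
              (div_le_div_iff_of_pos_right hL).2 (mul_le_mul_of_nonneg_right (husq x) (hμpos x).le)
      rw [tsum_div_const] at h1
      rwa [div_self hL.ne'] at h1
    have hlogu : ∀ x, Real.log (u x) =
        1/2 * Real.log (g x) + (1/2 * Real.log Nn - Real.log L) := by
      intro x
      have h1 : Real.log (u x) = Real.log (Real.sqrt (c x)) - Real.log L := by
        simp only [hudef]
        exact Real.log_div (Real.sqrt_pos.2 (hcpos x)).ne' hL.ne'
      have h2 : Real.log (Real.sqrt (c x)) = Real.log (c x) / 2 := Real.log_sqrt (hcpos x).le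
      have h3 : Real.log (g x) = Real.log (c x) - Real.log Nn := by
        simp only [hgdef]
        exact Real.log_div (hcpos x).ne' hNn.ne'
      rw [h1, h2, h3]; ring
    have hterm2 : ∀ x, 1/2 * (g x * Real.log (g x) * μ x)
        + (1/2 * Real.log Nn - Real.log L) * (g x * μ x)
        + (g x * μ x - u x * μ x) ≤ g x * Real.log (g x) * μ x := by
      intro x
      have hcore : g x * (Real.log (u x) - Real.log (g x)) ≤ u x - g x := by
        have h1 : Real.log (u x) - Real.log (g x) = Real.log (u x / g x) :=
          (Real.log_div (hupos x).ne' (hgpos x).ne').symm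
        have h2 : Real.log (u x / g x) ≤ u x / g x - 1 :=
          Real.log_le_sub_one_of_pos (div_pos (hupos x) (hgpos x))
        have h3 : g x * (u x / g x - 1) = u x - g x := by field_simp [(hgpos x).ne']
        rw [h1]
        calc g x * Real.log (u x / g x) ≤ g x * (u x / g x - 1) :=
              mul_le_mul_of_nonneg_left h2 (hgpos x).le
          _ = u x - g x := h3
      have h4 := mul_le_mul_of_nonneg_right hcore (hμpos x).le
      rw [hlogu x] at h4
      nlinarith [h4]
    have hlhs : Summable fun x => 1/2 * (g x * Real.log (g x) * μ x)
        + (1/2 * Real.log Nn - Real.log L) * (g x * μ x)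
        + (g x * μ x - u x * μ x) :=
      ((heg.mul_left (1/2)).add (hgm.mul_left _)).add (hgm.sub hum)
    have hlow := Summable.tsum_le_tsum hterm2 hlhs heg
    have hval : (∑' x, (1/2 * (g x * Real.log (g x) * μ x)
        + (1/2 * Real.log Nn - Real.log L) * (g x * μ x)
        + (g x * μ x - u x * μ x)))
        = 1/2 * E + (1/2 * Real.log Nn - Real.log L) + (1 - ∑' x, u x * μ x) := by
      rw [Summable.tsum_add ((heg.mul_left (1/2)).add (hgm.mul_left _)) (hgm.sub hum),
        Summable.tsum_add (heg.mul_left (1/2)) (hgm.mul_left _),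
        Summable.tsum_sub hgm hum, tsum_mul_left, tsum_mul_left, hg1, ← hEdef]
      ring
    rw [hval] at hlow
    have hElow : Real.log Nn - 2 * Real.log L ≤ E := by linarith [hU]
    -- upper bound via EI
    have hfg0 : (0:ℝ) ≤ 1/2 * (Tc / Nn) := by positivity
    have harg : A + (1/2 * (Tc / Nn)) / β ≤ C / Nn := by
      have heq : A + (1/2 * (Tc / Nn)) / β = (A * Nn + 1/2 * Tc / β) / Nn := by
        field_simp
      rw [heq, hCdef]
      have hnum : A * Nn + 1/2 * Tc / β ≤ A * N + Ir / β := by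
        have h1 : A * Nn ≤ A * N := mul_le_mul_of_nonneg_left hNnN (by linarith)
        have h2 : 1/2 * Tc / β ≤ Ir / β := by
          rw [hIrdef]
          exact (div_le_div_iff_of_pos_right hβ).2 (by linarith)
        linarith
      exact (div_le_div_iff_of_pos_right hNn).2 hnum
    have hargpos : 0 < A + (1/2 * (Tc / Nn)) / β := by
      have h2 : 0 ≤ (1/2 * (Tc / Nn)) / β := by positivity
      linarith
    have hEup : E ≤ α * Real.log (C / Nn) :=
      le_trans hEnt (mul_le_mul_of_nonneg_left (Real.log_le_log hargpos harg) hα.le)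
    rw [Real.log_div hC.ne' hNn.ne'] at hEup
    have hfinal_log : Real.log Nn * (α + 1) ≤ α * Real.log C + 2 * Real.log L := by
      nlinarith [hElow, hEup]
    have h1 : Nn ^ (α + 1) = Real.exp (Real.log Nn * (α + 1)) := Real.rpow_def_of_pos hNn _
    have h2 : C ^ α * L ^ 2 = Real.exp (α * Real.log C + 2 * Real.log L) := by
      rw [Real.exp_add]
      congr 1
      · rw [Real.rpow_def_of_pos hC, mul_comm]
      · rw [show (2:ℝ) * Real.log L = Real.log (L ^ 2) by
            rw [Real.log_pow]; push_cast; ring,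
          Real.exp_log hL2pos]
    rw [h1, h2]
    exact Real.exp_le_exp.2 hfinal_log
  -- wrap-up : from the truncated inequality to the full one
  have hNle : N ≤ (C ^ α * L ^ 2) ^ (1 / (α + 1)) := by
    apply Summable.tsum_le_of_sum_le hf2
    intro s
    set m := 1 + ∑ y ∈ s, f y ^ 2 with hmdef
    have hm : 0 < m := by
      have h0 : 0 ≤ ∑ y ∈ s, f y ^ 2 := Finset.sum_nonneg fun y _ => sq_nonneg _
      rw [hmdef]; linarith
    have hsm : ∀ x ∈ s, f x ^ 2 ≤ m := by
      intro x hx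
      have h0 : f x ^ 2 ≤ ∑ y ∈ s, f y ^ 2 :=
        Finset.single_le_sum (fun y _ => sq_nonneg (f y)) hx
      rw [hmdef]; linarith
    have hscμ : Summable fun x => min (f x ^ 2) m * μ x :=
      Summable.of_nonneg_of_le
        (fun x => mul_nonneg (le_of_lt (lt_min (hf2pos x) hm)) (hμpos x).le)
        (fun x => mul_le_mul_of_nonneg_right (min_le_left _ _) (hμpos x).le) hf2
    have hNm0 : (0:ℝ) ≤ ∑' x, min (f x ^ 2) m * μ x :=
      tsum_nonneg fun x => mul_nonneg (le_of_lt (lt_min (hf2pos x) hm)) (hμpos x).le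
    have hstep : ∑ x ∈ s, f x ^ 2 * μ x ≤ ∑' x, min (f x ^ 2) m * μ x := by
      calc ∑ x ∈ s, f x ^ 2 * μ x = ∑ x ∈ s, min (f x ^ 2) m * μ x :=
            Finset.sum_congr rfl fun x hx => by rw [min_eq_left (hsm x hx)]
        _ ≤ ∑' x, min (f x ^ 2) m * μ x :=
            Summable.sum_le_tsum s (fun x _ =>
              mul_nonneg (le_of_lt (lt_min (hf2pos x) hm)) (hμpos x).le) hscμ
    have hkey := key m hm
    have hrepr : (∑' x, min (f x ^ 2) m * μ x)
        = ((∑' x, min (f x ^ 2) m * μ x) ^ (α + 1)) ^ (1 / (α + 1)) := by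
      rw [← Real.rpow_mul hNm0, mul_one_div_cancel (by positivity : (0:ℝ) < α + 1).ne',
        Real.rpow_one]
    calc ∑ x ∈ s, f x ^ 2 * μ x ≤ ∑' x, min (f x ^ 2) m * μ x := hstep
      _ = ((∑' x, min (f x ^ 2) m * μ x) ^ (α + 1)) ^ (1 / (α + 1)) := hrepr
      _ ≤ (C ^ α * L ^ 2) ^ (1 / (α + 1)) :=
          Real.rpow_le_rpow (by positivity) hkey (by positivity)
  have hNfinal : N ^ (α + 1) ≤ C ^ α * L ^ 2 := by
    calc N ^ (α + 1) ≤ ((C ^ α * L ^ 2) ^ (1 / (α + 1))) ^ (α + 1) :=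
          Real.rpow_le_rpow hN.le hNle (by positivity)
      _ = C ^ α * L ^ 2 := by
          rw [← Real.rpow_mul (by positivity), one_div_mul_cancel
            (by positivity : (0:ℝ) < α + 1).ne', Real.rpow_one]
  have hfE : fisherE k μ (fun x => f x ^ 2) = ENNReal.ofReal Ir := by
    rw [hfE', ← ENNReal.ofReal_tsum_of_nonneg hterm0 hS, ← hT2def, hIrdef,
      ENNReal.ofReal_mul (by norm_num : (0:ℝ) ≤ 1/2)]
    congr 1
    rw [show (1/2 : ℝ) = (2:ℝ)⁻¹ by norm_num, ENNReal.ofReal_inv_of_pos (by norm_num),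
      ENNReal.ofReal_ofNat, one_div]
  rw [hfE]
  have e1 : ENNReal.ofReal Ir / ENNReal.ofReal β = ENNReal.ofReal (Ir / β) :=
    (ENNReal.ofReal_div_of_pos hβ).symm
  have e2 : ENNReal.ofReal (A * N) + ENNReal.ofReal (Ir / β) = ENNReal.ofReal C := by
    rw [← ENNReal.ofReal_add (mul_nonneg (by linarith) hN.le) (div_nonneg hIr hβ.le), hCdef]
  have e3 : ENNReal.ofReal C ^ α = ENNReal.ofReal (C ^ α) := ENNReal.ofReal_rpow_of_pos hC
  rw [e1, e2, e3, ← ENNReal.ofReal_mul (by positivity)]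
  apply ENNReal.ofReal_le_ofReal
  have hsq : Real.sqrt N ^ (2 * α + 2) = N ^ (α + 1) := by
    rw [Real.sqrt_eq_rpow, ← Real.rpow_mul hN.le]
    congr 1
    ring
  rw [hsq]
  exact hNfinal
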